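/- Let L be a limit operator on a set X with derived topology τ := τ_L, and let D ⊆ X be an open subset that is Hausdorff and locally compact in the subspace topology. Assume L is of first order on D. Then the following chain of inclusions of topologies holds: τ ⊆ τ* ⊆ (τ*)_Seq ⊆ τ_{L*}, where τ* is the topology generated by the subbasis τ ∪ {X \ K : K a compact subset of D}, (τ*)_Seq is the topology derived from the associated limit operator L_{τ*}, and τ_{L*} is the topology derived from the modified limit operator L*. -/

import Mathlib

open Set Filter Topology

universe u

/-- A limit operator on `X`: a map from sequences to sets of "limits",
compatible with subsequences. -/
def IsLimitOp {X : Type u} (L : (ℕ → X) → Set X) : Prop :=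
  ∀ (σ : ℕ → X) (φ : ℕ → ℕ), StrictMono φ → L σ ⊆ L (σ ∘ φ)

/-- `C` is sequentially closed with respect to the limit operator `L`. -/
def SeqClosedFor {X : Type u} (L : (ℕ → X) → Set X) (C : Set X) : Prop :=
  ∀ σ : ℕ → X, (∀ n, σ n ∈ C) → L σ ⊆ C

/-- The topology derived from a limit operator `L`: its closed sets are exactly
the sets `C` such that `L σ ⊆ C` for every sequence `σ` with values in `C`. -/
def derivedTop {X : Type u} (L : (ℕ → X) → Set X) (hL : IsLimitOp L) :
    TopologicalSpace X :=
  TopologicalSpace.ofClosed {C | SeqClosedFor L C}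
    (fun σ h => absurd (h 0) (Set.notMem_empty _))
    (fun A hA σ hσ p hp => by
      rw [Set.mem_sInter]
      intro C hC
      exact hA hC σ (fun n => Set.mem_sInter.mp (hσ n) C hC) hp)
    (by
      intro C hC B hB σ hσ p hp
      by_cases hinf : {n | σ n ∈ C}.Infinite
      · exact Or.inl (hC _ (fun n => Nat.nth_mem_of_infinite hinf n)
          (hL σ _ (Nat.nth_strictMono hinf) hp))
      · have hfin : {n | σ n ∈ C}.Finite := Set.not_infinite.mp hinf
        have hBinf : {n | σ n ∈ B}.Infinite :=
          Set.Infinite.mono (fun n hn => (hσ n).resolve_left hn) hfin.infinite_compl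
        exact Or.inr (hB _ (fun n => Nat.nth_mem_of_infinite hBinf n)
          (hL σ _ (Nat.nth_strictMono hBinf) hp)))

/-- The limit operator associated to a topology `t`: it assigns to each sequence
the set of all its limits in `t`. -/
def assocLimOp {X : Type u} (t : TopologicalSpace X) : (ℕ → X) → Set X :=
  fun σ => {p | Filter.Tendsto σ Filter.atTop (@nhds X t p)}

theorem assocLimOp_isLimitOp {X : Type u} (t : TopologicalSpace X) :
    IsLimitOp (assocLimOp t) :=
  fun _σ _φ hφ _p hp => hp.comp hφ.tendsto_atTop

/-- `τ_Seq`: the topology derived from the limit operator associated to `t`. -/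
def seqModTop {X : Type u} (t : TopologicalSpace X) : TopologicalSpace X :=
  derivedTop (assocLimOp t) (assocLimOp_isLimitOp t)

/-- `L` is of first order on `D`. -/
def IsFirstOrderOpOn {X : Type u} (L : (ℕ → X) → Set X) (hL : IsLimitOp L)
    (D : Set X) : Prop :=
  ∀ σ : ℕ → X, (∀ n, σ n ∈ D) → ∀ p ∈ D,
    (p ∈ L σ ↔ Filter.Tendsto σ Filter.atTop (@nhds X (derivedTop L hL) p))

/-- `L` is of first order. -/
def IsFirstOrderOp {X : Type u} (L : (ℕ → X) → Set X) (hL : IsLimitOp L) : Prop :=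
  ∀ (σ : ℕ → X) (p : X),
    p ∈ L σ ↔ Filter.Tendsto σ Filter.atTop (@nhds X (derivedTop L hL) p)

/-- A limit operator is coherent if every constant sequence has its value as a limit. -/
def CoherentOp {X : Type u} (L : (ℕ → X) → Set X) : Prop :=
  ∀ x : X, x ∈ L (fun _ => x)

/-- The transfinite iterates of a limit operator: `L^1 σ = L σ` and, for `i ≠ 1`,
`L^i σ = {p | p ∈ L ρ for some sequence ρ with values in ⋃_{j<i} L^j σ}`. -/
noncomputable def iterOp {X : Type u} (L : (ℕ → X) → Set X) (σ : ℕ → X)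
    (i : Ordinal.{0}) : Set X :=
  if i = 1 then L σ
  else {p | ∃ ρ : ℕ → X,
    (∀ n, ∃ j : Ordinal.{0}, ∃ _hj : j < i, ρ n ∈ iterOp L σ j) ∧ p ∈ L ρ}
termination_by i

open Classical in
/-- The modified limit operator `L*` relative to a subset `D`. -/
noncomputable def modOp {X : Type u} (L : (ℕ → X) → Set X) (D : Set X) :
    (ℕ → X) → Set X := fun σ =>
  if ∃ φ : ℕ → ℕ, StrictMono φ ∧ ∃ p ∈ D, p ∈ L (σ ∘ φ) then L σ ∩ D else L σ

/-- The `D`-separating topology `τ*`: generated by the subbasis consisting of the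
`t`-open sets together with the complements of compact subsets of `D`. -/
def sepTop {X : Type u} (t : TopologicalSpace X) (D : Set X) : TopologicalSpace X :=
  TopologicalSpace.generateFrom
    ({U : Set X | @IsOpen X t U} ∪ {V : Set X | ∃ K, K ⊆ D ∧ @IsCompact X t K ∧ V = Kᶜ})

/-- Condition (A_Fin): `t'` refines `t`. -/
def AFin {X : Type u} (t t' : TopologicalSpace X) : Prop :=
  ∀ U : Set X, @IsOpen X t U → @IsOpen X t' U

/-- Condition (A_Sep): every `p ∈ D` and `q ∉ D` are separated by a `t`-open set
and a `t'`-open set. -/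
def ASep {X : Type u} (t t' : TopologicalSpace X) (D : Set X) : Prop :=
  ∀ p ∈ D, ∀ q ∈ (Dᶜ : Set X), ∃ U V : Set X,
    @IsOpen X t U ∧ @IsOpen X t' V ∧ p ∈ U ∧ q ∈ V ∧ U ∩ V = ∅

/-- The restriction of a limit operator `L` to a subset `D`, as an operator on `↥D`:
`L|_D(σ) = L(σ) ∩ D`. -/
def restrictOp {X : Type u} (L : (ℕ → X) → Set X) (D : Set X) :
    (ℕ → D) → Set D :=
  fun σ => {d : D | (d : X) ∈ L (fun n => (σ n : X))}

theorem isOpen_derivedTop_iff {X : Type u} (L : (ℕ → X) → Set X) (hL : IsLimitOp L)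
    (U : Set X) : @IsOpen X (derivedTop L hL) U ↔ SeqClosedFor L Uᶜ := Iff.rfl

theorem isClosed_derivedTop_iff {X : Type u} (L : (ℕ → X) → Set X) (hL : IsLimitOp L)
    (C : Set X) : @IsClosed X (derivedTop L hL) C ↔ SeqClosedFor L C := by
  letI := derivedTop L hL
  rw [← isOpen_compl_iff, isOpen_derivedTop_iff, compl_compl]

theorem mem_limit_tendsto {X : Type u} (L : (ℕ → X) → Set X) (hL : IsLimitOp L)
    {σ : ℕ → X} {p : X} (hp : p ∈ L σ) :
    Filter.Tendsto σ Filter.atTop (@nhds X (derivedTop L hL) p) := by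
  letI := derivedTop L hL
  rw [tendsto_nhds]
  intro U hU hpU
  by_contra hev
  have hfreq : {n | σ n ∈ Uᶜ}.Infinite := by
    rw [← Nat.frequently_atTop_iff_infinite]
    exact Filter.not_eventually.mp hev
  exact ((isOpen_derivedTop_iff L hL U).mp hU) (σ ∘ Nat.nth _)
    (fun n => Nat.nth_mem_of_infinite hfreq n)
    (hL σ _ (Nat.nth_strictMono hfreq) hp) hpU

theorem tendsto_generateFrom_aux {X : Type u} {S : Set (Set X)} {f : ℕ → X} {p : X}
    (h : ∀ s ∈ S, p ∈ s → ∀ᶠ n in Filter.atTop, f n ∈ s) :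
    Filter.Tendsto f Filter.atTop (@nhds X (TopologicalSpace.generateFrom S) p) := by
  letI := TopologicalSpace.generateFrom S
  rw [TopologicalSpace.nhds_generateFrom]
  exact Filter.tendsto_iInf.2 fun s => Filter.tendsto_iInf.2 fun hs =>
    Filter.tendsto_principal.2 (h s hs.2 hs.1)

theorem sep_in_D {X : Type u} {D : Set X} (t : TopologicalSpace X)
    (hT2 : @T2Space D (TopologicalSpace.induced (Subtype.val : D → X) t))
    {x y : X} (hx : x ∈ D) (hy : y ∈ D) (hxy : x ≠ y) :
    ∃ U V : Set X, @IsOpen X t U ∧ @IsOpen X t V ∧ x ∈ U ∧ y ∈ V ∧ U ∩ V ∩ D = ∅ := by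
  letI := TopologicalSpace.induced (Subtype.val : D → X) t
  obtain ⟨U', V', hU', hV', hxU, hyV, hdisj⟩ :=
    @t2_separation D _ hT2 ⟨x, hx⟩ ⟨y, hy⟩ (by simpa using hxy)
  obtain ⟨U, hU, rfl⟩ := isOpen_induced_iff.mp hU'
  obtain ⟨V, hV, rfl⟩ := isOpen_induced_iff.mp hV'
  refine ⟨U, V, hU, hV, hxU, hyV, ?_⟩
  ext z
  simp only [Set.mem_inter_iff, Set.mem_empty_iff_false, iff_false]
  rintro ⟨⟨hzU, hzV⟩, hzD⟩
  exact Set.disjoint_left.mp hdisj (show (⟨z, hzD⟩ : D) ∈ Subtype.val ⁻¹' U from hzU) hzV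

theorem limit_unique_in_D {X : Type u} {D : Set X} (t : TopologicalSpace X)
    (hT2 : @T2Space D (TopologicalSpace.induced (Subtype.val : D → X) t))
    {f : ℕ → X} {x y : X} (hx : x ∈ D) (hy : y ∈ D) (hfD : ∀ n, f n ∈ D)
    (hfx : Filter.Tendsto f Filter.atTop (@nhds X t x))
    (hfy : Filter.Tendsto f Filter.atTop (@nhds X t y)) : x = y := by
  letI := t
  by_contra hxy
  obtain ⟨U, V, hU, hV, hxU, hyV, hUV⟩ := sep_in_D t hT2 hx hy hxy
  have h1 : ∀ᶠ n in Filter.atTop, f n ∈ U := hfx.eventually (hU.eventually_mem hxU)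
  have h2 : ∀ᶠ n in Filter.atTop, f n ∈ V := hfy.eventually (hV.eventually_mem hyV)
  obtain ⟨n, hnU, hnV⟩ := (h1.and h2).exists
  have : f n ∈ U ∩ V ∩ D := ⟨⟨hnU, hnV⟩, hfD n⟩
  rw [hUV] at this
  exact this

theorem exists_subseq_limit {X : Type u} (L : (ℕ → X) → Set X) (hL : IsLimitOp L)
    (D : Set X) (hD : @IsOpen X (derivedTop L hL) D)
    (hT2 : @T2Space D (TopologicalSpace.induced (Subtype.val : D → X) (derivedTop L hL)))
    (hfoD : IsFirstOrderOpOn L hL D)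
    {K : Set X} (hKD : K ⊆ D) (hK : @IsCompact X (derivedTop L hL) K)
    {κ : ℕ → X} (hκ : ∀ n, κ n ∈ K) :
    ∃ χ : ℕ → ℕ, StrictMono χ ∧ ∃ q ∈ D, q ∈ L (κ ∘ χ) := by
  letI τ := derivedTop L hL
  by_contra H
  push_neg at H
  -- no subsequence converges (in τ) to a point of D
  have Hconv : ∀ χ : ℕ → ℕ, StrictMono χ → ∀ q ∈ D,
      ¬ Filter.Tendsto (κ ∘ χ) Filter.atTop (@nhds X τ q) := by
    intro χ hχ q hq ht
    exact H χ hχ q hq ((hfoD (κ ∘ χ) (fun n => hKD (hκ (χ n))) q hq).mpr ht)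
  -- each value occurs finitely often
  have hval : ∀ q ∈ D, {n | κ n = q}.Finite := by
    intro q hq
    by_contra hinf
    have hinf' : {n | κ n = q}.Infinite := fun h => hinf h
    refine Hconv (Nat.nth _) (Nat.nth_strictMono hinf') q hq ?_
    exact tendsto_const_nhds.congr
      (fun j => (Nat.nth_mem_of_infinite hinf' j).symm)
  -- tails (union the complement of D) are closed
  set T : ℕ → Set X := fun m => κ '' Set.Ici m with hT
  have hTK : ∀ m, T m ⊆ K := by rintro m x ⟨n, _, rfl⟩; exact hκ n
  have hFclosed : ∀ m, @IsClosed X τ (T m ∪ Dᶜ) := by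
    intro m
    rw [isClosed_derivedTop_iff]
    intro ρ hρ x hx
    by_cases hxD : x ∈ D
    · left
      have hxt : Filter.Tendsto ρ Filter.atTop (@nhds X τ x) := mem_limit_tendsto L hL hx
      have hevD : ∀ᶠ n in Filter.atTop, ρ n ∈ D := hxt.eventually (hD.eventually_mem hxD)
      have hJ : {n | ρ n ∈ T m}.Infinite := by
        rw [← Nat.frequently_atTop_iff_infinite]
        exact (hevD.mono (fun n hn => (hρ n).resolve_right (fun h => h hn))).frequently
      set ρ' : ℕ → X := ρ ∘ Nat.nth _ with hρ'def
      have hρ'T : ∀ k, ρ' k ∈ T m := fun k => Nat.nth_mem_of_infinite hJ k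
      have hρ'x : Filter.Tendsto ρ' Filter.atTop (@nhds X τ x) :=
        hxt.comp (Nat.nth_strictMono hJ).tendsto_atTop
      by_cases hcon : ∃ y, {k | ρ' k = y}.Infinite
      · obtain ⟨y, hy⟩ := hcon
        obtain ⟨k0, hk0⟩ := hy.nonempty
        have hyT : y ∈ T m := hk0 ▸ hρ'T k0
        have hyD : y ∈ D := hKD (hTK m hyT)
        have h1 : Filter.Tendsto (ρ' ∘ Nat.nth _) Filter.atTop (@nhds X τ x) :=
          hρ'x.comp (Nat.nth_strictMono hy).tendsto_atTop
        have h2 : Filter.Tendsto (ρ' ∘ Nat.nth _) Filter.atTop (@nhds X τ y) :=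
          tendsto_const_nhds.congr (fun j => (Nat.nth_mem_of_infinite hy j).symm)
        have hfD : ∀ j, (ρ' ∘ Nat.nth _) j ∈ D := fun j =>
          (Nat.nth_mem_of_infinite hy j : ρ' _ = y) ▸ hyD
        have : x = y := limit_unique_in_D τ hT2 hxD hyD hfD h1 h2
        rw [this]; exact hyT
      · push_neg at hcon
        exfalso
        have key : ∀ k N : ℕ, ∃ k' > k, ∃ n > N, ρ' k' = κ n := by
          intro k N
          have hB : (⋃ n ∈ Set.Iic N, {k' | ρ' k' = κ n}).Finite :=
            Set.Finite.biUnion (Set.finite_Iic N) (fun n _ => hcon (κ n))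
          have hfin : ((⋃ n ∈ Set.Iic N, {k' | ρ' k' = κ n}) ∪ Set.Iic k).Finite :=
            hB.union (Set.finite_Iic k)
          obtain ⟨k', hk'⟩ := hfin.infinite_compl.nonempty
          rw [Set.mem_compl_iff, Set.mem_union, not_or] at hk'
          obtain ⟨hk'B, hk'k⟩ := hk'
          have hk'gt : k' > k := lt_of_not_ge (fun h => hk'k h)
          obtain ⟨n, hn, hne⟩ := hρ'T k'
          refine ⟨k', hk'gt, n, ?_, hne.symm⟩
          by_contra hnN
          exact hk'B (Set.mem_biUnion (Set.mem_Iic.mpr (le_of_not_gt hnN)) hne.symm)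
        choose k' hk' n' hn' heq using key
        set F' : ℕ → ℕ × ℕ := fun j =>
          Nat.rec ((k' 0 0, n' 0 0)) (fun _ p => (k' p.1 p.2, n' p.1 p.2)) j with hF'
        have hsnd : StrictMono (fun j => (F' j).2) :=
          strictMono_nat_of_lt_succ (fun j => hn' (F' j).1 (F' j).2)
        have hfst : StrictMono (fun j => (F' j).1) :=
          strictMono_nat_of_lt_succ (fun j => hk' (F' j).1 (F' j).2)
        have heq' : ∀ j, ρ' ((F' j).1) = κ ((F' j).2) := by
          intro j
          induction j with
          | zero => exact heq 0 0
          | succ j _ => exact heq (F' j).1 (F' j).2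
        refine Hconv (fun j => (F' j).2) hsnd x hxD ?_
        have : Filter.Tendsto (fun j => ρ' ((F' j).1)) Filter.atTop (@nhds X τ x) :=
          hρ'x.comp hfst.tendsto_atTop
        exact this.congr (fun j => heq' j)
    · exact Or.inr hxD
  -- compactness: a point in all tails
  obtain ⟨q, hqK, hq⟩ := hK.inter_iInter_nonempty (fun m => T m ∪ Dᶜ) hFclosed (by
    intro u
    refine ⟨κ (u.sup id), hκ _, Set.mem_iInter₂.mpr fun m hm => Or.inl ?_⟩
    exact ⟨u.sup id, Set.mem_Ici.mpr (Finset.le_sup (f := id) hm), rfl⟩)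
  have hqD : q ∈ D := hKD hqK
  have hqT : ∀ m, q ∈ T m := fun m =>
    ((Set.mem_iInter.mp hq m).resolve_right (fun h => h hqD))
  have : {n | κ n = q}.Infinite := by
    rw [← Nat.frequently_atTop_iff_infinite]
    refine Filter.frequently_atTop.mpr fun m => ?_
    obtain ⟨n, hn, hne⟩ := hqT m
    exact ⟨n, Set.mem_Ici.mp hn, hne⟩
  exact Set.not_infinite.mpr (hval q hqD) this

theorem aFin_seqModTop {X : Type u} (t : TopologicalSpace X) : AFin t (seqModTop t) := by
  intro U hU
  refine (isOpen_derivedTop_iff (assocLimOp t) (assocLimOp_isLimitOp t) U).mpr ?_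
  intro σ hσ p hp hpU
  have hev : ∀ᶠ n in Filter.atTop, σ n ∈ U := (@tendsto_nhds _ t _ _ _ _).mp hp U hU hpU
  obtain ⟨n, hn⟩ := hev.exists
  exact hσ n hn

theorem stmt_15 {X : Type u} (L : (ℕ → X) → Set X) (hL : IsLimitOp L)
    (D : Set X) (hD : @IsOpen X (derivedTop L hL) D)
    (hT2 : @T2Space D (TopologicalSpace.induced (Subtype.val : D → X) (derivedTop L hL)))
    (hLC : @LocallyCompactSpace D (TopologicalSpace.induced (Subtype.val : D → X) (derivedTop L hL)))
    (hfoD : IsFirstOrderOpOn L hL D)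
    (hM : IsLimitOp (modOp L D)) :
    AFin (derivedTop L hL) (sepTop (derivedTop L hL) D) ∧
    AFin (sepTop (derivedTop L hL) D) (seqModTop (sepTop (derivedTop L hL) D)) ∧
    AFin (seqModTop (sepTop (derivedTop L hL) D)) (derivedTop (modOp L D) hM) := by
  set τ := derivedTop L hL with hτ
  refine ⟨?_, aFin_seqModTop _, ?_⟩
  · intro U hU
    exact TopologicalSpace.GenerateOpen.basic U (Or.inl hU)
  · intro U hU
    have hC : SeqClosedFor (assocLimOp (sepTop τ D)) Uᶜ :=
      (isOpen_derivedTop_iff (assocLimOp (sepTop τ D)) (assocLimOp_isLimitOp _) U).mp hU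
    refine (isOpen_derivedTop_iff (modOp L D) hM U).mpr ?_
    intro σ hσ p hp
    -- key: find a subsequence τ*-converging to p
    suffices h : ∃ ψ : ℕ → ℕ, StrictMono ψ ∧
        Filter.Tendsto (σ ∘ ψ) Filter.atTop (@nhds X (sepTop τ D) p) by
      obtain ⟨ψ, hψ, ht⟩ := h
      exact hC (σ ∘ ψ) (fun n => hσ (ψ n)) ht
    rw [modOp] at hp
    split_ifs at hp with hcond
    · -- p ∈ L σ ∩ D
      obtain ⟨hpL, hpD⟩ := hp
      have hDc : SeqClosedFor L Dᶜ := (isOpen_derivedTop_iff L hL D).mp hD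
      have hinfD : {n | σ n ∈ D}.Infinite := by
        by_contra hfin
        have hinf' : {n | σ n ∈ Dᶜ}.Infinite :=
          Set.Infinite.mono (fun n hn => hn) (Set.not_infinite.mp hfin).infinite_compl
        exact hDc (σ ∘ Nat.nth _) (fun n => Nat.nth_mem_of_infinite hinf' n)
          (hL σ _ (Nat.nth_strictMono hinf') hpL) hpD
      refine ⟨Nat.nth _, Nat.nth_strictMono hinfD, ?_⟩
      set κ : ℕ → X := σ ∘ Nat.nth _ with hκdef
      have hκD : ∀ n, κ n ∈ D := fun n => Nat.nth_mem_of_infinite hinfD n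
      have hκconv : Filter.Tendsto κ Filter.atTop (@nhds X τ p) :=
        (hfoD κ hκD p hpD).mp (hL σ _ (Nat.nth_strictMono hinfD) hpL)
      refine tendsto_generateFrom_aux ?_
      rintro s (hs | ⟨K, hKD, hKc, rfl⟩) hps
      · exact (@tendsto_nhds _ τ _ _ _ _).mp hκconv s hs hps
      · -- s = Kᶜ, K compact ⊆ D; K is closed in the subspace D
        letI := TopologicalSpace.induced (Subtype.val : D → X) τ
        haveI := hT2
        have hK' : IsCompact ((Subtype.val : D → X) ⁻¹' K) := by
          rw [Topology.IsEmbedding.subtypeVal.isCompact_iff]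
          have : (Subtype.val : D → X) '' ((Subtype.val : D → X) ⁻¹' K) = K := by
            rw [Set.image_preimage_eq_inter_range, Subtype.range_coe,
              Set.inter_eq_self_of_subset_left hKD]
          rwa [this]
        have hKcl : IsClosed ((Subtype.val : D → X) ⁻¹' K) := hK'.isClosed
        obtain ⟨V, hV, hVeq⟩ := isOpen_induced_iff.mp (isOpen_compl_iff.mpr hKcl)
        have hpV : p ∈ V := by
          have : (⟨p, hpD⟩ : D) ∈ (Subtype.val ⁻¹' V) := by
            rw [hVeq]; exact hps
          exact this
        have hev : ∀ᶠ n in Filter.atTop, κ n ∈ V :=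
          hκconv.eventually (hV.eventually_mem hpV)
        refine hev.mono fun n hn hnK => ?_
        have : (⟨κ n, hκD n⟩ : D) ∈ (Subtype.val ⁻¹' V) := hn
        rw [hVeq] at this
        exact this hnK
    · -- no subsequence has a limit in D
      have hpD : p ∉ D := fun h => hcond ⟨id, strictMono_id, p, h, hp⟩
      have hconv : Filter.Tendsto σ Filter.atTop (@nhds X τ p) := mem_limit_tendsto L hL hp
      refine ⟨id, strictMono_id, ?_⟩
      show Filter.Tendsto σ Filter.atTop (@nhds X (sepTop τ D) p)
      refine tendsto_generateFrom_aux ?_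
      rintro s (hs | ⟨K, hKD, hKc, rfl⟩) hps
      · exact (@tendsto_nhds _ τ _ _ _ _).mp hconv s hs hps
      · by_contra hev
        have hI : {n | σ n ∈ K}.Infinite := by
          rw [← Nat.frequently_atTop_iff_infinite]
          exact (Filter.not_eventually.mp hev).mono fun n hn => not_not.mp hn
        obtain ⟨χ, hχ, q, hqD, hqL⟩ := exists_subseq_limit L hL D hD hT2 hfoD hKD hKc
          (κ := σ ∘ Nat.nth _) (fun n => Nat.nth_mem_of_infinite hI n)
        exact hcond ⟨Nat.nth _ ∘ χ, (Nat.nth_strictMono hI).comp hχ, q, hqD, hqL⟩
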